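/- arXiv:2011.09949 — 3 statements merged into one kernel-verified Lean document; each statement's English description precedes it below -/
import Mathlib

section
/- Let rh, ys, A, B be real numbers with ys > 0, and define u(r) = r² + ys² + A², v(r) = (rh − r)² + ys² + B², f(r) = ys² · (u(r)·v(r))^(−3/2), and the cubic p(r) = 6r³ − 9·rh·r² + 3·(2·ys² + rh² + A² + B²)·r − 3·rh·(ys² + A²). Then for every real r, the derivative of f at r equals 0 if and only if p(r) = 0. -/
open Real

/-- Proposition 4: the derivative of `f(r) = ys² · (u(r)·v(r))^(-3/2)` vanishes
at `r` if and only if the cubic `p(r)` vanishes at `r`. -/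
theorem snr_small_ris_critical_iff (rh ys A B : ℝ) (hys : 0 < ys) (r : ℝ) :
    deriv
      (fun r : ℝ => ys ^ 2 *
        ((r ^ 2 + ys ^ 2 + A ^ 2) * ((rh - r) ^ 2 + ys ^ 2 + B ^ 2)) ^ (-(3 : ℝ) / 2))
      r = 0 ↔
    6 * r ^ 3 - 9 * rh * r ^ 2 + 3 * (2 * ys ^ 2 + rh ^ 2 + A ^ 2 + B ^ 2) * r
      - 3 * rh * (ys ^ 2 + A ^ 2) = 0 := by
  have hu : (0:ℝ) < r ^ 2 + ys ^ 2 + A ^ 2 := by positivity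
  have hv : (0:ℝ) < (rh - r) ^ 2 + ys ^ 2 + B ^ 2 := by positivity
  have hg : (0:ℝ) < (r ^ 2 + ys ^ 2 + A ^ 2) * ((rh - r) ^ 2 + ys ^ 2 + B ^ 2) :=
    mul_pos hu hv
  have hu' : HasDerivAt (fun x : ℝ => x ^ 2 + ys ^ 2 + A ^ 2) (2 * r) r := by
    simpa using (((hasDerivAt_pow 2 r).add_const (ys ^ 2)).add_const (A ^ 2))
  have hv' : HasDerivAt (fun x : ℝ => (rh - x) ^ 2 + ys ^ 2 + B ^ 2)
      (-(2 * (rh - r))) r := by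
    have : HasDerivAt (fun x : ℝ => rh - x) (-1) r := by
      simpa using (hasDerivAt_id r).const_sub rh
    simpa [mul_comm, mul_assoc, mul_left_comm] using ((this.pow 2).add_const (ys ^ 2)).add_const (B ^ 2)
  set g' : ℝ := 2 * r * ((rh - r) ^ 2 + ys ^ 2 + B ^ 2) +
      (r ^ 2 + ys ^ 2 + A ^ 2) * -(2 * (rh - r)) with hg'def
  have hgd : HasDerivAt
      (fun x : ℝ => (x ^ 2 + ys ^ 2 + A ^ 2) * ((rh - x) ^ 2 + ys ^ 2 + B ^ 2)) g' r :=
    hu'.mul hv'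
  have hfd : HasDerivAt
      (fun x : ℝ => ys ^ 2 *
        ((x ^ 2 + ys ^ 2 + A ^ 2) * ((rh - x) ^ 2 + ys ^ 2 + B ^ 2)) ^ (-(3 : ℝ) / 2))
      (ys ^ 2 * (g' * (-(3 : ℝ) / 2) *
        ((r ^ 2 + ys ^ 2 + A ^ 2) * ((rh - r) ^ 2 + ys ^ 2 + B ^ 2)) ^ ((-(3 : ℝ) / 2) - 1)))
      r :=
    (hgd.rpow_const (Or.inl hg.ne')).const_mul (ys ^ 2)
  rw [hfd.deriv]
  have hpow : (0:ℝ) <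
      ((r ^ 2 + ys ^ 2 + A ^ 2) * ((rh - r) ^ 2 + ys ^ 2 + B ^ 2)) ^ ((-(3 : ℝ) / 2) - 1) :=
    rpow_pos_of_pos hg _
  constructor
  · intro h
    have hg0 : g' = 0 := by
      have hne : ys ^ 2 * ((-(3 : ℝ) / 2) *
          ((r ^ 2 + ys ^ 2 + A ^ 2) * ((rh - r) ^ 2 + ys ^ 2 + B ^ 2)) ^ ((-(3 : ℝ) / 2) - 1)) ≠ 0 := by
        positivity
      have : g' * (ys ^ 2 * ((-(3 : ℝ) / 2) *
          ((r ^ 2 + ys ^ 2 + A ^ 2) * ((rh - r) ^ 2 + ys ^ 2 + B ^ 2)) ^ ((-(3 : ℝ) / 2) - 1))) = 0 := by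
        linarith [h]
      rcases mul_eq_zero.mp this with h' | h'
      · exact h'
      · exact absurd h' hne
    have : (3 : ℝ) / 2 * g' =
        6 * r ^ 3 - 9 * rh * r ^ 2 + 3 * (2 * ys ^ 2 + rh ^ 2 + A ^ 2 + B ^ 2) * r
          - 3 * rh * (ys ^ 2 + A ^ 2) := by
      rw [hg'def]; ring
    rw [← this, hg0]; ring
  · intro h
    have hg0 : g' = 0 := by
      have : (3 : ℝ) / 2 * g' = 0 := by rw [hg'def]; linarith [h]
      linarith
    rw [hg0]; ring
end

section
/- Let rh, ys, A, B be real numbers with rh > 0 and ys > 0, and define u(r) = r² + ys² + A², v(r) = (rh − r)² + ys² + B², f(r) = ys² · (u(r)·v(r))^(−3/2), and the cubic p(r) = 6r³ − 9·rh·r² + 3·(2·ys² + rh² + A² + B²)·r − 3·rh·(ys² + A²). Then f attains a global maximum over ℝ, and every global maximizer r* satisfies 0 < r* < rh and p(r*) = 0. -/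
open Real

section Aux

variable (rh ys A B : ℝ)

private lemma aux_upos (hys : 0 < ys) (r : ℝ) : 0 < r ^ 2 + ys ^ 2 + A ^ 2 := by
  nlinarith [sq_nonneg r, sq_nonneg A, mul_pos hys hys]

private lemma aux_gpos (hys : 0 < ys) (r : ℝ) :
    0 < (r ^ 2 + ys ^ 2 + A ^ 2) * ((rh - r) ^ 2 + ys ^ 2 + B ^ 2) :=
  mul_pos (aux_upos ys A hys r) (aux_upos ys B hys (rh - r))

end Aux

/-- Proposition 4 (optimal placement): `f(r) = ys² · (u(r)·v(r))^(-3/2)` attains a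
global maximum over ℝ, and every global maximizer `r*` satisfies `0 < r* < rh`
and is a root of the cubic `p`. -/
theorem snr_small_ris_optimal_placement (rh ys A B : ℝ) (hrh : 0 < rh) (hys : 0 < ys) :
    (∃ rstar : ℝ, ∀ r : ℝ,
      ys ^ 2 * ((r ^ 2 + ys ^ 2 + A ^ 2) * ((rh - r) ^ 2 + ys ^ 2 + B ^ 2)) ^ (-(3 : ℝ) / 2)
        ≤ ys ^ 2 *
          ((rstar ^ 2 + ys ^ 2 + A ^ 2) * ((rh - rstar) ^ 2 + ys ^ 2 + B ^ 2)) ^ (-(3 : ℝ) / 2)) ∧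
    (∀ rstar : ℝ,
      (∀ r : ℝ,
        ys ^ 2 * ((r ^ 2 + ys ^ 2 + A ^ 2) * ((rh - r) ^ 2 + ys ^ 2 + B ^ 2)) ^ (-(3 : ℝ) / 2)
          ≤ ys ^ 2 *
            ((rstar ^ 2 + ys ^ 2 + A ^ 2) * ((rh - rstar) ^ 2 + ys ^ 2 + B ^ 2)) ^ (-(3 : ℝ) / 2)) →
      0 < rstar ∧ rstar < rh ∧
        6 * rstar ^ 3 - 9 * rh * rstar ^ 2
          + 3 * (2 * ys ^ 2 + rh ^ 2 + A ^ 2 + B ^ 2) * rstar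
          - 3 * rh * (ys ^ 2 + A ^ 2) = 0) := by
  set g : ℝ → ℝ := fun r => (r ^ 2 + ys ^ 2 + A ^ 2) * ((rh - r) ^ 2 + ys ^ 2 + B ^ 2) with hg
  have hgpos : ∀ r, 0 < g r := fun r => aux_gpos rh ys A B hys r
  have hys2 : (0:ℝ) < ys ^ 2 := by positivity
  -- minimizing g ⟹ maximizing f
  have hfw : ∀ r0 : ℝ, (∀ r, g r0 ≤ g r) → ∀ r : ℝ,
      ys ^ 2 * ((r ^ 2 + ys ^ 2 + A ^ 2) * ((rh - r) ^ 2 + ys ^ 2 + B ^ 2)) ^ (-(3 : ℝ) / 2)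
        ≤ ys ^ 2 *
          ((r0 ^ 2 + ys ^ 2 + A ^ 2) * ((rh - r0) ^ 2 + ys ^ 2 + B ^ 2)) ^ (-(3 : ℝ) / 2) := by
    intro r0 hr0 r
    have := Real.rpow_le_rpow_of_nonpos (hgpos r0) (hr0 r) (by norm_num : -(3:ℝ)/2 ≤ 0)
    exact mul_le_mul_of_nonneg_left this (le_of_lt hys2)
  -- maximizing f ⟹ minimizing g
  have hbw : ∀ r0 : ℝ, (∀ r : ℝ,
      ys ^ 2 * ((r ^ 2 + ys ^ 2 + A ^ 2) * ((rh - r) ^ 2 + ys ^ 2 + B ^ 2)) ^ (-(3 : ℝ) / 2)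
        ≤ ys ^ 2 *
          ((r0 ^ 2 + ys ^ 2 + A ^ 2) * ((rh - r0) ^ 2 + ys ^ 2 + B ^ 2)) ^ (-(3 : ℝ) / 2)) →
      ∀ r, g r0 ≤ g r := by
    intro r0 h r
    by_contra hlt
    push_neg at hlt
    have h2 := Real.rpow_lt_rpow_of_neg (hgpos r) hlt (by norm_num : -(3:ℝ)/2 < 0)
    have h3 := mul_lt_mul_of_pos_left h2 hys2
    exact absurd (h r) (not_le.mpr h3)
  -- existence of a global minimizer of g
  have hgcont : Continuous g := by fun_prop
  obtain ⟨r0, hr0mem, hr0min⟩ :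
      ∃ r0 ∈ Set.Icc (-(max 1 (g 0 / ys ^ 2 + 1))) (max 1 (g 0 / ys ^ 2 + 1)),
        IsMinOn g (Set.Icc (-(max 1 (g 0 / ys ^ 2 + 1))) (max 1 (g 0 / ys ^ 2 + 1))) r0 := by
    refine (isCompact_Icc).exists_isMinOn ⟨0, ?_⟩ hgcont.continuousOn
    constructor
    · simp only [neg_le, neg_zero]
      exact le_trans zero_le_one (le_max_left _ _)
    · exact le_trans zero_le_one (le_max_left _ _)
  set C := max 1 (g 0 / ys ^ 2 + 1) with hC
  have hC1 : (1:ℝ) ≤ C := le_max_left _ _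
  have hCg : g 0 / ys ^ 2 + 1 ≤ C := le_max_right _ _
  have hglobal : ∀ r, g r0 ≤ g r := by
    intro r
    by_cases hr : r ∈ Set.Icc (-C) C
    · exact hr0min hr
    · -- |r| > C, so g r > g 0 ≥ g r0
      have h0le : g r0 ≤ g 0 := hr0min (by
        constructor
        · simpa using le_trans zero_le_one hC1
        · exact le_trans zero_le_one hC1)
      have hrC : C < |r| := by
        rcases abs_cases r with ⟨h1, _⟩ | ⟨h1, _⟩ <;>
          (simp only [Set.mem_Icc, not_and_or, not_le] at hr; rcases hr with h | h <;> linarith)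
      have hrsq : C ^ 2 < r ^ 2 := by
        have : C ^ 2 < |r| ^ 2 := by
          apply pow_lt_pow_left₀ hrC (by linarith) (by norm_num)
        simpa [sq_abs] using this
      have hglb : r ^ 2 * ys ^ 2 ≤ g r := by
        have hu : r ^ 2 ≤ r ^ 2 + ys ^ 2 + A ^ 2 := by nlinarith [sq_nonneg A]
        have hv : ys ^ 2 ≤ (rh - r) ^ 2 + ys ^ 2 + B ^ 2 := by nlinarith [sq_nonneg (rh - r), sq_nonneg B]
        exact mul_le_mul hu hv (le_of_lt hys2) (by nlinarith [sq_nonneg r, sq_nonneg A, hys2])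
      have hCC : g 0 < C ^ 2 * ys ^ 2 := by
        have h1 : g 0 / ys ^ 2 < C := by linarith
        have h2 : g 0 < C * ys ^ 2 := by
          have := (div_lt_iff₀ hys2).mp h1
          linarith
        have hC2 : C ≤ C ^ 2 := by nlinarith [hC1]
        have h3 : C * ys ^ 2 ≤ C ^ 2 * ys ^ 2 := mul_le_mul_of_nonneg_right hC2 (le_of_lt hys2)
        linarith
      nlinarith
  refine ⟨⟨r0, hfw r0 hglobal⟩, ?_⟩
  intro rstar hmax
  have hmin : ∀ r, g rstar ≤ g r := hbw rstar hmax
  -- derivative of g at rstar is zero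
  have h1 : HasDerivAt (fun r : ℝ => r ^ 2 + ys ^ 2 + A ^ 2) (2 * rstar) rstar := by
    have := ((hasDerivAt_pow 2 rstar).add_const (ys ^ 2)).add_const (A ^ 2)
    simpa using this
  have h2 : HasDerivAt (fun r : ℝ => (rh - r) ^ 2 + ys ^ 2 + B ^ 2)
      (2 * (rh - rstar) ^ 1 * (-1)) rstar := by
    have hin : HasDerivAt (fun r : ℝ => rh - r) (-1) rstar := by
      simpa using (hasDerivAt_id rstar).const_sub rh
    have := (hin.pow 2).add_const (ys ^ 2)
    have := this.add_const (B ^ 2)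
    simpa using this
  have hd : HasDerivAt g
      (2 * rstar * ((rh - rstar) ^ 2 + ys ^ 2 + B ^ 2)
        + (rstar ^ 2 + ys ^ 2 + A ^ 2) * (2 * (rh - rstar) ^ 1 * (-1))) rstar := h1.mul h2
  have hloc : IsLocalMin g rstar := by
    have : IsMinOn g Set.univ rstar := fun r _ => hmin r
    exact this.isLocalMin Filter.univ_mem
  have hderiv0 := hloc.hasDerivAt_eq_zero hd
  have hp : 6 * rstar ^ 3 - 9 * rh * rstar ^ 2
      + 3 * (2 * ys ^ 2 + rh ^ 2 + A ^ 2 + B ^ 2) * rstar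
      - 3 * rh * (ys ^ 2 + A ^ 2) = 0 := by
    have := hderiv0
    nlinarith [this, sq_nonneg rstar]
  have hu := aux_upos ys A hys rstar
  have hv := aux_upos ys B hys (rh - rstar)
  refine ⟨?_, ?_, hp⟩
  · by_contra hle
    push_neg at hle
    nlinarith [mul_pos hys hys, sq_nonneg rstar, sq_nonneg A, sq_nonneg B,
      mul_nonneg (neg_nonneg.mpr hle) (sq_nonneg rstar),
      mul_nonneg (neg_nonneg.mpr hle) (sq_nonneg A),
      mul_nonneg (neg_nonneg.mpr hle) (sq_nonneg B),
      mul_nonneg (neg_nonneg.mpr hle) (sq_nonneg ys)]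
  · by_contra hge
    push_neg at hge
    -- rstar ≥ rh: p(rstar) = 3*(rstar*v - (rh-rstar)*u) > 0
    have hvgt : 0 < (rh - rstar) ^ 2 + ys ^ 2 + B ^ 2 := hv
    nlinarith [mul_pos (lt_of_lt_of_le hrh hge) hvgt,
      mul_nonneg (sub_nonneg.mpr hge) (le_of_lt hu)]
end

section
/- Let rh, ys, A, B be real numbers with rh > 0 and ys > 0, define u(r) = r² + ys² + A², v(r) = (rh − r)² + ys² + B², g(r) = (u(r)/v(r))^(3/2), and let r* = (−A² + rh² + B² + √((A² − rh² − B²)² + 4·rh²·(ys² + A²))) / (2·rh). Then for every r ≥ 0 with r ≠ r*, g(r) < g(r*); that is, r* is the unique global maximizer of g on [0, ∞). -/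
open Real

/-- Proposition 5 (optimality): `r*` of equation (24) is the unique global
maximizer of `g(r) = (u(r)/v(r))^(3/2)` over `[0, ∞)`. -/
theorem snr_large_ris_optimal_placement (rh ys A B : ℝ) (hrh : 0 < rh) (hys : 0 < ys) :
    let rstar := (-A ^ 2 + rh ^ 2 + B ^ 2 +
      Real.sqrt ((A ^ 2 - rh ^ 2 - B ^ 2) ^ 2 + 4 * rh ^ 2 * (ys ^ 2 + A ^ 2))) / (2 * rh)
    ∀ r : ℝ, 0 ≤ r → r ≠ rstar →
      ((r ^ 2 + ys ^ 2 + A ^ 2) / ((rh - r) ^ 2 + ys ^ 2 + B ^ 2)) ^ ((3 : ℝ) / 2) <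
      ((rstar ^ 2 + ys ^ 2 + A ^ 2) / ((rh - rstar) ^ 2 + ys ^ 2 + B ^ 2)) ^ ((3 : ℝ) / 2) := by
  intro rstar r _ hne
  set s := Real.sqrt ((A ^ 2 - rh ^ 2 - B ^ 2) ^ 2 + 4 * rh ^ 2 * (ys ^ 2 + A ^ 2)) with hsdef
  have hs2 : s ^ 2 = (A ^ 2 - rh ^ 2 - B ^ 2) ^ 2 + 4 * rh ^ 2 * (ys ^ 2 + A ^ 2) := by
    rw [hsdef, Real.sq_sqrt]
    nlinarith [sq_nonneg (A ^ 2 - rh ^ 2 - B ^ 2), sq_nonneg (rh * ys), sq_nonneg (rh * A)]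
  have hsnn : 0 ≤ s := Real.sqrt_nonneg _
  have hspos : 0 < s := by
    rcases hsnn.lt_or_eq with h | h
    · exact h
    · exfalso
      nlinarith [sq_nonneg (A ^ 2 - rh ^ 2 - B ^ 2), sq_nonneg (rh * A), mul_pos hrh hys]
  have ht : 2 * rh * rstar = (-A ^ 2 + rh ^ 2 + B ^ 2) + s := by
    have : rstar = ((-A ^ 2 + rh ^ 2 + B ^ 2) + s) / (2 * rh) := rfl
    rw [this]
    field_simp
  clear_value rstar
  clear_value s
  have hvr : 0 < (rh - r) ^ 2 + ys ^ 2 + B ^ 2 := by positivity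
  have hvt : 0 < (rh - rstar) ^ 2 + ys ^ 2 + B ^ 2 := by positivity
  have hur : 0 ≤ r ^ 2 + ys ^ 2 + A ^ 2 := by positivity
  have hne2 : (r - rstar) ^ 2 > 0 := by
    have : r - rstar ≠ 0 := sub_ne_zero.mpr hne
    positivity
  have key : (r ^ 2 + ys ^ 2 + A ^ 2) / ((rh - r) ^ 2 + ys ^ 2 + B ^ 2) <
      (rstar ^ 2 + ys ^ 2 + A ^ 2) / ((rh - rstar) ^ 2 + ys ^ 2 + B ^ 2) := by
    rw [div_lt_div_iff₀ hvr hvt]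
    have hid : (rstar ^ 2 + ys ^ 2 + A ^ 2) * ((rh - r) ^ 2 + ys ^ 2 + B ^ 2) -
        (r ^ 2 + ys ^ 2 + A ^ 2) * ((rh - rstar) ^ 2 + ys ^ 2 + B ^ 2) =
        s * (r - rstar) ^ 2 := by
      have hq4 : (4 * rh) * (rh * rstar ^ 2) =
          (4 * rh) * ((rh ^ 2 + B ^ 2 - A ^ 2) * rstar + rh * (ys ^ 2 + A ^ 2)) := by
        linear_combination (2 * rh * rstar + (-A ^ 2 + rh ^ 2 + B ^ 2 + s)) * ht + hs2 -
          2 * (rh ^ 2 + B ^ 2 - A ^ 2) * ht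
      have hq : rh * rstar ^ 2 = (rh ^ 2 + B ^ 2 - A ^ 2) * rstar + rh * (ys ^ 2 + A ^ 2) :=
        mul_left_cancel₀ (by positivity : (4 * rh : ℝ) ≠ 0) hq4
      linear_combination 2 * (r - rstar) * hq + (rstar - r) ^ 2 * ht
    nlinarith [mul_pos hspos hne2]
  have hbase : 0 ≤ (r ^ 2 + ys ^ 2 + A ^ 2) / ((rh - r) ^ 2 + ys ^ 2 + B ^ 2) :=
    div_nonneg hur hvr.le
  exact Real.rpow_lt_rpow hbase key (by norm_num)
end
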